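/- Let Γ be a group with a finite symmetric generating set S, word length |·|_S, and word metric d_S. Let (X, δ̂) be a compact metric space on which Γ acts by homeomorphisms, and suppose L ≥ 1 is such that every element ψ ∈ Γ acts on (X, δ̂) as an L^{|ψ|_S}-bi-Lipschitz map. Let s > 0 and u > 0 satisfy e^{−s}·L ≤ e^{−u} and suppose ∑_{ψ∈Γ} e^{−u·|ψ|_S} converges to a value K. Then ∑_{ψ∈Γ} e^{−s·|ψ|_S} converges, and the metric δ_e(x,y) = ∑_{ψ∈Γ} e^{−s·|ψ|_S}·δ̂(ψ⁻¹x, ψ⁻¹y) satisfies δ̂(x,y) ≤ δ_e(x,y) ≤ K·δ̂(x,y) for all x,y ∈ X; in particular δ_e is bi-Lipschitz equivalent to δ̂. -/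

import Mathlib

/-- The word length of `g` with respect to a generating set `S`. -/
noncomputable def wordLength {Γ : Type*} [Group Γ] (S : Set Γ) (g : Γ) : ℕ :=
  sInf {n : ℕ | ∃ l : List Γ, (∀ x ∈ l, x ∈ S) ∧ l.length = n ∧ l.prod = g}

/-- The distance `δ_p(x,y) = ∑_{ψ ∈ Γ} e^{-s d_S(p,ψ)} δ̂(ψ⁻¹ x, ψ⁻¹ y)`. -/
noncomputable def deltaP {Γ X : Type*} [Group Γ] [MetricSpace X] [MulAction Γ X]
    (S : Set Γ) (s : ℝ) (p : Γ) (x y : X) : ℝ :=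
  ∑' ψ : Γ, Real.exp (-s * (wordLength S (p⁻¹ * ψ) : ℝ)) * dist (ψ⁻¹ • x) (ψ⁻¹ • y)

lemma wordLength_set_nonempty {Γ : Type*} [Group Γ] (S : Finset Γ)
    (hsym : ∀ x ∈ S, x⁻¹ ∈ S) (hgen : Subgroup.closure (S : Set Γ) = ⊤) (g : Γ) :
    {n : ℕ | ∃ l : List Γ, (∀ x ∈ l, x ∈ (S : Set Γ)) ∧ l.length = n ∧ l.prod = g}.Nonempty := by
  have hg : g ∈ Submonoid.closure ((S : Set Γ) ∪ (S : Set Γ)⁻¹) := by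
    rw [← Subgroup.closure_toSubmonoid]
    show g ∈ Subgroup.closure (S : Set Γ)
    rw [hgen]; trivial
  obtain ⟨l, hl, hprod⟩ := Submonoid.exists_list_of_mem_closure hg
  refine ⟨l.length, l, ?_, rfl, hprod⟩
  intro x hx
  rcases hl x hx with h | h
  · exact h
  · simpa using hsym _ h

lemma wordLength_one' {Γ : Type*} [Group Γ] (S : Set Γ) : wordLength S 1 = 0 := by
  have : (0 : ℕ) ∈ {n : ℕ | ∃ l : List Γ, (∀ x ∈ l, x ∈ S) ∧ l.length = n ∧ l.prod = 1} :=
    ⟨[], by simp⟩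
  exact Nat.sInf_eq_zero.mpr (Or.inl this)

lemma wordLength_inv_le {Γ : Type*} [Group Γ] (S : Finset Γ)
    (hsym : ∀ x ∈ S, x⁻¹ ∈ S) (hgen : Subgroup.closure (S : Set Γ) = ⊤) (g : Γ) :
    wordLength (S : Set Γ) g⁻¹ ≤ wordLength (S : Set Γ) g := by
  obtain ⟨l, hl, hlen, hprod⟩ := Nat.sInf_mem (wordLength_set_nonempty S hsym hgen g)
  apply Nat.sInf_le
  refine ⟨(l.map fun x => x⁻¹).reverse, ?_, by simpa [wordLength] using hlen, ?_⟩
  · intro x hx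
    simp only [List.mem_reverse, List.mem_map] at hx
    obtain ⟨a, ha, rfl⟩ := hx
    simpa using hsym _ (hl a ha)
  · rw [← List.prod_inv_reverse, hprod]

lemma wordLength_inv {Γ : Type*} [Group Γ] (S : Finset Γ)
    (hsym : ∀ x ∈ S, x⁻¹ ∈ S) (hgen : Subgroup.closure (S : Set Γ) = ⊤) (g : Γ) :
    wordLength (S : Set Γ) g⁻¹ = wordLength (S : Set Γ) g := by
  refine le_antisymm (wordLength_inv_le S hsym hgen g) ?_
  have := wordLength_inv_le S hsym hgen g⁻¹
  simpa using this

/-- If `Γ` acts on `(X, δ̂)` by bi-Lipschitz maps, every `ψ` being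
`L^{|ψ|_S}`-bi-Lipschitz, and `s, u > 0` satisfy `e^{-s} L ≤ e^{-u}` with
`∑_{ψ} e^{-u |ψ|_S} = K` convergent, then `∑_{ψ} e^{-s |ψ|_S}` converges and
`δ̂ ≤ δ_e ≤ K δ̂`; in particular `δ_e` is bi-Lipschitz equivalent to `δ̂`. -/
theorem deltaE_biLipschitz_to_base {Γ X : Type*} [Group Γ]
    (S : Finset Γ) (hsym : ∀ x ∈ S, x⁻¹ ∈ S)
    (hgen : Subgroup.closure (S : Set Γ) = ⊤)
    [MetricSpace X] [CompactSpace X] [MulAction Γ X]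
    (hcont : ∀ γ : Γ, Continuous fun x : X => γ • x)
    (L : ℝ) (hL : 1 ≤ L)
    (hbl : ∀ (ψ : Γ) (x y : X),
      (L ^ wordLength (S : Set Γ) ψ)⁻¹ * dist x y ≤ dist (ψ • x) (ψ • y) ∧
      dist (ψ • x) (ψ • y) ≤ L ^ wordLength (S : Set Γ) ψ * dist x y)
    (s u : ℝ) (hs : 0 < s) (hu : 0 < u)
    (hsu : Real.exp (-s) * L ≤ Real.exp (-u)) (K : ℝ)
    (hK : HasSum (fun ψ : Γ => Real.exp (-u * (wordLength (S : Set Γ) ψ : ℝ))) K) :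
    (Summable fun ψ : Γ => Real.exp (-s * (wordLength (S : Set Γ) ψ : ℝ))) ∧
    ∀ x y : X,
      dist x y ≤ deltaP (S : Set Γ) s 1 x y ∧
      deltaP (S : Set Γ) s 1 x y ≤ K * dist x y := by
  have hL0 : (0:ℝ) < L := lt_of_lt_of_le one_pos hL
  -- key pointwise estimate
  have key : ∀ n : ℕ, Real.exp (-s * n) * L ^ n ≤ Real.exp (-u * n) := by
    intro n
    have h1 : Real.exp (-s * n) * L ^ n = (Real.exp (-s) * L) ^ n := by
      rw [mul_pow, ← Real.exp_nat_mul]; ring_nf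
    have h2 : Real.exp (-u * n) = (Real.exp (-u)) ^ n := by
      rw [← Real.exp_nat_mul]; ring_nf
    rw [h1, h2]
    exact pow_le_pow_left₀ (by positivity) hsu n
  have hse : ∀ n : ℕ, Real.exp (-s * n) ≤ Real.exp (-u * n) := by
    intro n
    calc Real.exp (-s * n) ≤ Real.exp (-s * n) * L ^ n := by
          nlinarith [Real.exp_pos (-s * (n:ℝ)), one_le_pow₀ hL (n := n),
            pow_pos hL0 n]
      _ ≤ Real.exp (-u * n) := key n
  have hsum : Summable fun ψ : Γ => Real.exp (-s * (wordLength (S : Set Γ) ψ : ℝ)) := by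
    refine hK.summable.of_nonneg_of_le (fun ψ => (Real.exp_pos _).le) (fun ψ => hse _)
  refine ⟨hsum, fun x y => ?_⟩
  set f : Γ → ℝ := fun ψ =>
    Real.exp (-s * (wordLength (S : Set Γ) ((1:Γ)⁻¹ * ψ) : ℝ)) * dist (ψ⁻¹ • x) (ψ⁻¹ • y)
    with hf
  have hf1 : ∀ ψ : Γ, f ψ =
      Real.exp (-s * (wordLength (S : Set Γ) ψ : ℝ)) * dist (ψ⁻¹ • x) (ψ⁻¹ • y) := by
    intro ψ; simp [hf]
  have hfnonneg : ∀ ψ, 0 ≤ f ψ := fun ψ => by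
    rw [hf1]; positivity
  have hbound : ∀ ψ : Γ, f ψ ≤ Real.exp (-u * (wordLength (S : Set Γ) ψ : ℝ)) * dist x y := by
    intro ψ
    rw [hf1]
    have hd : dist (ψ⁻¹ • x) (ψ⁻¹ • y) ≤ L ^ wordLength (S : Set Γ) ψ * dist x y := by
      have := (hbl ψ⁻¹ x y).2
      rwa [wordLength_inv S hsym hgen] at this
    calc Real.exp (-s * (wordLength (S : Set Γ) ψ : ℝ)) * dist (ψ⁻¹ • x) (ψ⁻¹ • y)
        ≤ Real.exp (-s * (wordLength (S : Set Γ) ψ : ℝ)) *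
            (L ^ wordLength (S : Set Γ) ψ * dist x y) := by
          exact mul_le_mul_of_nonneg_left hd (Real.exp_pos _).le
      _ = (Real.exp (-s * (wordLength (S : Set Γ) ψ : ℝ)) * L ^ wordLength (S : Set Γ) ψ)
            * dist x y := by ring
      _ ≤ Real.exp (-u * (wordLength (S : Set Γ) ψ : ℝ)) * dist x y :=
          mul_le_mul_of_nonneg_right (key _) dist_nonneg
  have hgsum : Summable fun ψ : Γ =>
      Real.exp (-u * (wordLength (S : Set Γ) ψ : ℝ)) * dist x y :=
    hK.summable.mul_right _
  have hfsum : Summable f := hgsum.of_nonneg_of_le hfnonneg hbound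
  have hdelta : deltaP (S : Set Γ) s 1 x y = ∑' ψ, f ψ := rfl
  constructor
  · -- lower bound
    have h1 : f 1 ≤ ∑' ψ, f ψ := Summable.le_tsum hfsum 1 (fun b _ => hfnonneg b)
    have hfone : f 1 = dist x y := by
      rw [hf1]; simp [wordLength_one']
    rw [hdelta, ← hfone]; exact h1
  · -- upper bound
    rw [hdelta]
    calc ∑' ψ, f ψ ≤ ∑' ψ, Real.exp (-u * (wordLength (S : Set Γ) ψ : ℝ)) * dist x y :=
          Summable.tsum_le_tsum hbound hfsum hgsum
      _ = K * dist x y := by rw [tsum_mul_right, hK.tsum_eq]
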